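/- Let C be a covering of a finite set U with transversal matroid M(C). If X is a flat of M(C) (i.e., cl_{M(C)}(X) = X), then X = {x ∈ U : cl_{M(C)}({x}) ⊆ X} and X = {x ∈ U : cl_{M(C)}({x}) ∩ X ≠ ∅}. -/

import Mathlib

open Set

/-- The rank function of a matroid: the maximum cardinality of an independent subset. -/
noncomputable def mrk {α : Type*} (M : Matroid α) (X : Set α) : ℕ :=
  sSup {n : ℕ | ∃ I ⊆ X, M.Indep I ∧ I.ncard = n}

/-- `M` is the transversal matroid (on ground set `univ`) induced by the family `𝒞` of
subsets: independent sets are exactly the partial transversals of `𝒞`. -/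
def IsTransversalMatroidOf {α : Type*} (M : Matroid α) (𝒞 : Set (Set α)) : Prop :=
  M.E = Set.univ ∧
    ∀ I : Set α, M.Indep I ↔
      ∃ f : α → Set α, Set.InjOn f I ∧ ∀ x ∈ I, f x ∈ 𝒞 ∧ x ∈ f x

/-- A hyperplane of a matroid on ground set `univ`: a flat of rank `r(U) - 1`. -/
def IsHyperplaneOf {α : Type*} (M : Matroid α) (H : Set α) : Prop :=
  M.IsFlat H ∧ mrk M H = mrk M Set.univ - 1

theorem flat_fixed_point {α : Type*} [Fintype α]
    (𝒞 : Set (Set α)) (hne : ∅ ∉ 𝒞) (hcov : ⋃₀ 𝒞 = Set.univ)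
    (M : Matroid α) (hM : IsTransversalMatroidOf M 𝒞)
    (X : Set α) (hX : M.IsFlat X) :
    X = {x : α | M.closure {x} ⊆ X} ∧
    X = {x : α | (M.closure {x} ∩ X).Nonempty} := by
  obtain ⟨hE, hindep⟩ := hM
  have hXcl : M.closure X = X := hX.closure
  -- every singleton is independent
  have hsing : ∀ y : α, M.Indep {y} := by
    intro y
    have hy : y ∈ ⋃₀ 𝒞 := by rw [hcov]; trivial
    obtain ⟨C, hC, hyC⟩ := hy
    exact (hindep {y}).2 ⟨fun _ ↦ C, Set.injOn_singleton _ _, fun x hx ↦ by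
      simp only [Set.mem_singleton_iff] at hx; subst hx; exact ⟨hC, hyC⟩⟩
  have hnoloop : ∀ y : α, y ∉ M.closure ∅ := by
    intro y hy
    have := (hsing y).notMem_closure_sdiff_of_mem (Set.mem_singleton y)
    simp at this
    exact this hy
  have hmem_self : ∀ x : α, x ∈ M.closure {x} := fun x ↦
    M.mem_closure_self x (by rw [hE]; trivial)
  constructor
  · ext x
    simp only [Set.mem_setOf_eq]
    constructor
    · intro hx
      have : M.closure {x} ⊆ M.closure X := M.closure_subset_closure (by simpa)
      rwa [hXcl] at this
    · intro h
      exact h (hmem_self x)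
  · ext x
    simp only [Set.mem_setOf_eq]
    constructor
    · intro hx
      exact ⟨x, hmem_self x, hx⟩
    · rintro ⟨y, hyx, hyX⟩
      have hy' : y ∈ M.closure (insert x ∅) \ M.closure ∅ :=
        ⟨by simpa using hyx, hnoloop y⟩
      have hx' := Matroid.closure_exchange hy'
      have hx'' : x ∈ M.closure {y} := by simpa using hx'.1
      have : M.closure {y} ⊆ M.closure X := M.closure_subset_closure (by simpa)
      rw [hXcl] at this
      exact this hx''
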